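/- Let P be a toric sharp monoid (fine, saturated, torsion-free, sharp) such that there exists a submonoid Q ⊆ P generated by d = rank(P^{gp}) elements with Q close to P. Then Q is a free commutative monoid of rank d. -/

import Mathlib

/-- Let `P` be a toric sharp monoid of rank `d` (realized via
its canonical embedding as a finitely generated, sharp, saturated submonoid of
`ℤ^d` generating `ℤ^d` as a group), and let `Q ⊆ P` be a submonoid generated
by `d` elements that is close to `P`. Then `Q` is a free commutative monoid of
rank `d` (isomorphic to `ℕ^d`). -/
theorem stmt15 {d : ℕ} (P : AddSubmonoid (Fin d → ℤ))
    (hsharp : ∀ p ∈ P, -p ∈ P → p = 0)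
    (hfg : P.FG)
    (hsat : ∀ x ∈ AddSubgroup.closure (P : Set (Fin d → ℤ)),
      ∀ n : ℕ, 0 < n → n • x ∈ P → x ∈ P)
    (hrank : AddSubgroup.closure (P : Set (Fin d → ℤ)) = ⊤)
    (f : Fin d → (Fin d → ℤ)) (hfP : ∀ i, f i ∈ P)
    (Q : AddSubmonoid (Fin d → ℤ)) (hQ : Q = AddSubmonoid.closure (Set.range f))
    (hclose : ∀ p ∈ P, ∃ n : ℕ, 0 < n ∧ n • p ∈ Q) :
    Nonempty (Q ≃+ (Fin d → ℕ)) := by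
  classical
  -- the coordinatewise cast into ℚ^d
  let L : (Fin d → ℤ) →ₗ[ℤ] (Fin d → ℚ) :=
    { toFun := fun v i => (v i : ℚ)
      map_add' := by intro a b; funext i; push_cast; simp
      map_smul' := by intro c v; funext i; push_cast; simp }
  have hLinj : Function.Injective L := by
    intro a b h
    funext i
    have h2 : ((a i : ℚ)) = ((b i : ℚ)) := congrFun h i
    exact_mod_cast h2
  set S : Submodule ℚ (Fin d → ℚ) := Submodule.span ℚ (Set.range (⇑L ∘ f)) with hS
  -- images of f under L lie in S, hence images of Q lie in S
  have hQS : ∀ q ∈ Q, L q ∈ S := by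
    intro q hq
    rw [hQ] at hq
    have : AddSubmonoid.closure (Set.range f) ≤
        (S.toAddSubmonoid).comap L.toAddMonoidHom := by
      rw [AddSubmonoid.closure_le]
      rintro _ ⟨i, rfl⟩
      exact Submodule.subset_span ⟨i, rfl⟩
    exact this hq
  -- images of P lie in S
  have hPS : ∀ p ∈ P, L p ∈ S := by
    intro p hp
    obtain ⟨n, hn, hnQ⟩ := hclose p hp
    have h1 : L (n • p) ∈ S := hQS _ hnQ
    have h2 : L (n • p) = (n : ℚ) • L p := by
      funext i
      show (((n • p) i : ℤ) : ℚ) = ((n : ℚ) • L p) i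
      simp [L, Pi.smul_apply, smul_eq_mul]
    rw [h2] at h1
    have := S.smul_mem ((n : ℚ)⁻¹) h1
    rwa [smul_smul, inv_mul_cancel₀ (by exact_mod_cast hn.ne'), one_smul] at this
  -- hence images of the group closure of P lie in S
  have hGS : ∀ v ∈ AddSubgroup.closure (P : Set (Fin d → ℤ)), L v ∈ S := by
    intro v hv
    have : AddSubgroup.closure (P : Set (Fin d → ℤ)) ≤
        (S.toAddSubgroup).comap L.toAddMonoidHom := by
      rw [AddSubgroup.closure_le]
      intro p hp
      exact hPS p hp
    exact this hv
  -- S is everything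
  have hSpan : ⊤ ≤ S := by
    rw [← (Pi.basisFun ℚ (Fin d)).span_eq, Submodule.span_le]
    rintro _ ⟨j, rfl⟩
    have h1 : (Pi.single j 1 : Fin d → ℤ) ∈ AddSubgroup.closure (P : Set (Fin d → ℤ)) := by
      rw [hrank]; trivial
    have h2 := hGS _ h1
    have h3 : L (Pi.single j 1 : Fin d → ℤ) = Pi.basisFun ℚ (Fin d) j := by
      funext i
      simp [L, Pi.basisFun_apply, Pi.single_apply]
    rwa [h3] at h2
  -- linear independence over ℚ, then over ℤ
  have hcard : Fintype.card (Fin d) = Module.finrank ℚ (Fin d → ℚ) := by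
    simp
  have hLIQ : LinearIndependent ℚ (⇑L ∘ f) :=
    linearIndependent_of_top_le_span_of_card_eq_finrank hSpan hcard
  have hLIZ' : LinearIndependent ℤ (⇑L ∘ f) :=
    hLIQ.restrict_scalars (by intro a b h; simpa using h)
  have hLI : LinearIndependent ℤ f := LinearIndependent.of_comp L hLIZ'
  -- the monoid hom ℕ^d → ℤ^d
  let Φ : (Fin d → ℕ) →+ (Fin d → ℤ) :=
    { toFun := fun n => ∑ i, (n i : ℤ) • f i
      map_zero' := by simp
      map_add' := by
        intro a b
        rw [← Finset.sum_add_distrib]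
        show ∑ i, (((a + b) i : ℕ) : ℤ) • f i = ∑ i, ((a i : ℤ) • f i + (b i : ℤ) • f i)
        apply Finset.sum_congr rfl
        intro i _
        simp only [Pi.add_apply]; push_cast; rw [add_smul] }
  have hΦQ : ∀ n, Φ n ∈ Q := by
    intro n
    show ∑ i, (n i : ℤ) • f i ∈ Q
    refine AddSubmonoid.sum_mem Q fun i _ => ?_
    have hfiQ : f i ∈ Q := by
      rw [hQ]; exact AddSubmonoid.subset_closure ⟨i, rfl⟩
    rw [show ((n i : ℤ)) • f i = (n i) • f i from natCast_zsmul _ _]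
    exact AddSubmonoid.nsmul_mem Q hfiQ _
  let Φ' : (Fin d → ℕ) →+ Q := Φ.codRestrict Q hΦQ
  have hinj : Function.Injective Φ' := by
    intro a b h
    have h' : Φ a = Φ b := congrArg Subtype.val h
    have hz : ∑ i, ((a i : ℤ) - (b i : ℤ)) • f i = 0 := by
      simp only [sub_smul, Finset.sum_sub_distrib]
      rw [show (∑ i, (a i : ℤ) • f i) = Φ a from rfl,
        show (∑ i, (b i : ℤ) • f i) = Φ b from rfl, h', sub_self]
    have := Fintype.linearIndependent_iff.mp hLI _ hz
    funext i
    have := this i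
    omega
  have key : ∀ q ∈ Q, ∃ n : Fin d → ℕ, Φ n = q := by
    intro q hq
    rw [hQ] at hq
    induction hq using AddSubmonoid.closure_induction with
    | mem x hx =>
      obtain ⟨i, rfl⟩ := hx
      refine ⟨Pi.single i 1, ?_⟩
      show ∑ j, ((Pi.single i 1 : Fin d → ℕ) j : ℤ) • f j = f i
      rw [Finset.sum_eq_single i]
      · simp
      · intro j _ hj; simp [Pi.single_apply, hj]
      · simp
    | zero =>
      refine ⟨0, ?_⟩
      show ∑ i, ((0 : Fin d → ℕ) i : ℤ) • f i = 0
      simp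
    | add x y hx hy ihx ihy =>
      obtain ⟨a, ha⟩ := ihx
      obtain ⟨b, hb⟩ := ihy
      exact ⟨a + b, by rw [map_add, ha, hb]⟩
  have hsurj : Function.Surjective Φ' := by
    rintro ⟨q, hq⟩
    obtain ⟨n, hn⟩ := key q hq
    exact ⟨n, Subtype.ext hn⟩
  exact ⟨(AddEquiv.ofBijective Φ' ⟨hinj, hsurj⟩).symm⟩
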